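/- If a pre-cubical set K is proper, then its non-looping length covering K̃ is also proper. -/

import Mathlib

/-- A pre-cubical set: a family of sets of `n`-cubes with face maps
`dᵢᵉ : K[n+1] → K[n]` (indices `i` are 0-based here) satisfying the
pre-cubical relations `dᵢᵉ dⱼᶯ = dⱼ₋₁ᶯ dᵢᵉ` for `i < j`. -/
structure PCS where
  cube : ℕ → Type
  face : Bool → ∀ {n : ℕ}, Fin (n + 1) → cube (n + 1) → cube n
  comm : ∀ {n : ℕ} (ε η : Bool) (i : Fin (n + 1)) (j : Fin (n + 2)),
    (i : ℕ) < (j : ℕ) → ∀ c : cube (n + 2),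
    face ε i (face η j c) =
      face η ⟨(j : ℕ) - 1, by omega⟩ (face ε ⟨(i : ℕ), by omega⟩ c)

/-- The number of `*`'s (encoded as `none`) of a function `f : {1,…,n} → {0,1,*}`. -/
def numStars {n : ℕ} (f : Fin n → Option Bool) : ℕ := ∑ i, if f i = none then 1 else 0

lemma numStars_castSucc {n : ℕ} (f : Fin (n + 1) → Option Bool) :
    numStars f = numStars (f ∘ Fin.castSucc) + (if f (Fin.last n) = none then 1 else 0) := by
  unfold numStars
  rw [Fin.sum_univ_castSucc]
  rfl

/-- Auxiliary for `dface`: the last `k` coordinates are untouched. -/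
def PCS.dfaceAux (K : PCS) : ∀ (n k : ℕ) (f : Fin n → Option Bool),
    K.cube (n + k) → K.cube (numStars f + k)
  | 0, _, _, c => cast (congrArg K.cube (by simp [numStars])) c
  | n + 1, k, f, c =>
    match h : f (Fin.last n) with
    | some ε =>
        cast (congrArg K.cube (by rw [numStars_castSucc f, h]; simp))
          (K.dfaceAux n k (f ∘ Fin.castSucc)
            (K.face ε ⟨n, by omega⟩ (cast (congrArg K.cube (by omega)) c)))
    | none =>
        cast (congrArg K.cube (by rw [numStars_castSucc f, h]; simp; omega))
          (K.dfaceAux n (k + 1) (f ∘ Fin.castSucc) (cast (congrArg K.cube (by omega)) c))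

/-- `d_f(c)` : the composition `d₁^{f(1)} ⋯ d_n^{f(n)}` of face maps, where
`f i = some ε` means apply `dᵢᵉ` and `f i = none` means `dᵢ^*` (identity). -/
def PCS.dface (K : PCS) {n : ℕ} (f : Fin n → Option Bool) (c : K.cube n) :
    K.cube (numStars f) :=
  cast (congrArg K.cube (by omega)) (K.dfaceAux n 0 f (cast (congrArg K.cube (by omega)) c))

/-- `dᵉ(c)`: the extreme vertex of a cube. -/
def PCS.extreme (K : PCS) (ε : Bool) {n : ℕ} (c : K.cube n) : K.cube 0 :=
  cast (congrArg K.cube (by simp [numStars])) (K.dface (fun _ => some ε) c)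

/-- A pre-cubical set is proper if cubes are distinguished by their
pairs of extreme vertices. -/
def PCS.Proper (K : PCS) : Prop :=
  Function.Injective fun c : Σ n, K.cube n =>
    ({K.extreme false c.2, K.extreme true c.2} : Set (K.cube 0))

/-- The non-looping length covering `K̃` of `K`: `K̃[n] = K[n] × ℤ`,
`dᵢᵉ(c,k) = (dᵢᵉ(c), k+ε)`. -/
def PCS.cover (K : PCS) : PCS where
  cube n := K.cube n × ℤ
  face := fun ε {n} i c => (K.face ε i c.1, c.2 + if ε then 1 else 0)
  comm := by
    intro n ε η i j hij c
    refine Prod.ext ?_ ?_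
    · exact K.comm ε η i j hij c.1
    · dsimp
      ring

/-- number of `some true` values -/
def tcount {n : ℕ} (f : Fin n → Option Bool) : ℤ := ∑ i, if f i = some true then 1 else 0

lemma tcount_castSucc {n : ℕ} (f : Fin (n + 1) → Option Bool) :
    tcount f = tcount (f ∘ Fin.castSucc) + (if f (Fin.last n) = some true then 1 else 0) := by
  unfold tcount
  rw [Fin.sum_univ_castSucc]
  rfl

lemma castProd (K : PCS) {a b : ℕ} (e : a = b) (c : K.cube a) (z : ℤ) :
    cast (congrArg K.cover.cube e) ((c, z) : K.cover.cube a) =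
      ((cast (congrArg K.cube e) c, z) : K.cover.cube b) := by
  subst e; rfl

lemma cover_dfaceAux (K : PCS) : ∀ (n k : ℕ) (f : Fin n → Option Bool)
    (c : K.cube (n + k)) (z : ℤ),
    K.cover.dfaceAux n k f ((c, z) : K.cover.cube (n + k)) =
      ((K.dfaceAux n k f c, z + tcount f) : K.cover.cube (numStars f + k))
  | 0, k, f, c, z => by
    have h : tcount f = 0 := by simp [tcount]
    erw [PCS.dfaceAux, PCS.dfaceAux]; rw [castProd, h, add_zero]
    simp [numStars]
  | n + 1, k, f, c, z => by
    erw [PCS.dfaceAux, PCS.dfaceAux]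
    split
    · rename_i ε h1
      rw [castProd (e := by omega)]
      have hface : K.cover.face ε ⟨n, by omega⟩
          ((cast (congrArg K.cube (by omega : n + 1 + k = n + k + 1)) c, z) :
            K.cover.cube (n + k + 1)) =
          ((K.face ε ⟨n, by omega⟩ (cast (congrArg K.cube (by omega)) c),
            z + if ε then 1 else 0) : K.cover.cube (n + k)) := rfl
      rw [hface, cover_dfaceAux K n k (f ∘ Fin.castSucc),
        castProd (e := by rw [numStars_castSucc f, h1]; simp)]
      have ht : tcount f = tcount (f ∘ Fin.castSucc) + (if ε then 1 else 0) := by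
        rw [tcount_castSucc f, h1]
        rcases ε with _ | _ <;> simp
      refine Prod.ext rfl ?_
      · simp only [ht]; ring
    · rename_i h1
      rw [castProd (e := by omega), cover_dfaceAux K n (k + 1) (f ∘ Fin.castSucc),
        castProd (e := by rw [numStars_castSucc f, h1]; simp; omega)]
      have ht : tcount f = tcount (f ∘ Fin.castSucc) := by
        rw [tcount_castSucc f, h1]; simp
      refine Prod.ext rfl ?_
      · simp only [ht]

lemma cover_extreme (K : PCS) (ε : Bool) {n : ℕ} (c : K.cube n) (z : ℤ) :
    K.cover.extreme ε ((c, z) : K.cover.cube n) =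
      ((K.extreme ε c, z + if ε then (n : ℤ) else 0) : K.cover.cube 0) := by
  unfold PCS.extreme PCS.dface
  have ht : tcount (fun _ : Fin n => some ε) = if ε then (n : ℤ) else 0 := by
    rcases ε with _ | _ <;> simp [tcount]
  rw [castProd (e := by omega), cover_dfaceAux,
    castProd (e := by omega), castProd (e := by simp [numStars]), ht]

lemma pair_fst {α : Type} (p q : α × ℤ) :
    Prod.fst '' ({p, q} : Set (α × ℤ)) = {p.1, q.1} := by
  rw [Set.image_insert_eq, Set.image_singleton]

/-- If `K` is proper, so is its non-looping length covering. -/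
theorem stmt2 (K : PCS) (hK : K.Proper) : K.cover.Proper := by
  rintro ⟨n, c, z⟩ ⟨m, d, w⟩ h
  simp only at h
  rw [cover_extreme, cover_extreme, cover_extreme, cover_extreme] at h
  norm_num at h
  have hfst : ({K.extreme false c, K.extreme true c} : Set (K.cube 0)) =
      {K.extreme false d, K.extreme true d} := by
    have := congrArg (Set.image Prod.fst) h
    exact (pair_fst _ _).symm.trans (this.trans (pair_fst _ _))
  have hsig := hK (a₁ := ⟨n, c⟩) (a₂ := ⟨m, d⟩) hfst
  obtain ⟨hnm, hcd⟩ := Sigma.mk.inj_iff.mp hsig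
  subst hnm
  have hcd' : c = d := eq_of_heq hcd
  subst hcd'
  have hzw : z = w := by
    replace h : ({(K.extreme false c, z), (K.extreme true c, z + (n : ℤ))} : Set (K.cube 0 × ℤ)) =
        {(K.extreme false c, w), (K.extreme true c, w + (n : ℤ))} := h
    have h1 : ((K.extreme false c, z) : K.cube 0 × ℤ) ∈
        ({(K.extreme false c, w), (K.extreme true c, w + n)} : Set (K.cube 0 × ℤ)) := by
      rw [← h]; left; rfl
    have h2 : ((K.extreme false c, w) : K.cube 0 × ℤ) ∈
        ({(K.extreme false c, z), (K.extreme true c, z + n)} : Set (K.cube 0 × ℤ)) := by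
      rw [h]; left; rfl
    rcases h1 with h1 | h1
    · exact (Prod.mk_inj.mp h1).2
    · rcases h2 with h2 | h2
      · exact ((Prod.mk_inj.mp h2).2).symm
      · have e1 := (Prod.mk_inj.mp h1).2
        have e2 := (Prod.mk_inj.mp h2).2
        omega
  subst hzw
  rfl
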